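/- arXiv:2508.10153 — 2 statements merged into one kernel-verified Lean document; each statement's English description precedes it below -/
import Mathlib

section
/- Let A, B ∈ F₂[[q]] be odd, let n ∈ ℕ, and let U, V ∈ F₂[[q]] with V odd. Then for every natural number k ≤ n+1 there exists an odd W_k ∈ F₂[[q]] such that T_{A,B}^k(U + q^{n+1} V) = T_{A,B}^k(U) + q^{n+1−k} W_k. -/
open PowerSeries
open scoped Classical

/-- Shift map on `F₂[[q]]`: equals `x / q` whenever `q ∣ x`. -/
noncomputable def divq (x : PowerSeries (ZMod 2)) : PowerSeries (ZMod 2) :=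
  PowerSeries.mk fun n => PowerSeries.coeff (n + 1) x

/-- `T_{A,B}(x) = x/q` if `q ∣ x`, and `(A*x + B)/q` otherwise.  (When `A`, `B`, `x` are
all odd, `A*x + B` is divisible by `q`, so `divq` computes the true quotient there.) -/
noncomputable def Tab (A B x : PowerSeries (ZMod 2)) : PowerSeries (ZMod 2) :=
  if X ∣ x then divq x else divq (A * x + B)

lemma divq_add (x y : PowerSeries (ZMod 2)) : divq (x + y) = divq x + divq y := by
  ext n
  simp [divq]

lemma divq_X_mul (y : PowerSeries (ZMod 2)) : divq (X * y) = y := by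
  ext n
  simp [divq, PowerSeries.coeff_succ_X_mul]

lemma divq_pow_succ_mul (m : ℕ) (y : PowerSeries (ZMod 2)) :
    divq (X ^ (m + 1) * y) = X ^ m * y := by
  rw [pow_succ', mul_assoc, divq_X_mul]

lemma Tab_step (A B : PowerSeries (ZMod 2))
    (hA : PowerSeries.constantCoeff A = 1)
    (hB : PowerSeries.constantCoeff B = 1)
    (m : ℕ) (x W : PowerSeries (ZMod 2))
    (hW : PowerSeries.constantCoeff W = 1) :
    ∃ W' : PowerSeries (ZMod 2), PowerSeries.constantCoeff W' = 1 ∧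
      Tab A B (x + X ^ (m + 1) * W) = Tab A B x + X ^ m * W' := by
  have hdvd : (X : PowerSeries (ZMod 2)) ∣ X ^ (m + 1) * W :=
    dvd_mul_of_dvd_left (dvd_pow_self X (Nat.succ_ne_zero m)) _
  by_cases hx : (X : PowerSeries (ZMod 2)) ∣ x
  · refine ⟨W, hW, ?_⟩
    have hx2 : (X : PowerSeries (ZMod 2)) ∣ x + X ^ (m + 1) * W := dvd_add hx hdvd
    rw [Tab, if_pos hx2, Tab, if_pos hx, divq_add, divq_pow_succ_mul]
  · refine ⟨A * W, by simp [hA, hW], ?_⟩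
    have hx2 : ¬ (X : PowerSeries (ZMod 2)) ∣ x + X ^ (m + 1) * W := by
      rw [PowerSeries.X_dvd_iff] at hx ⊢
      rw [PowerSeries.X_dvd_iff] at hdvd
      simpa [hdvd] using hx
    rw [Tab, if_neg hx2, Tab, if_neg hx]
    have h : A * (x + X ^ (m + 1) * W) + B = (A * x + B) + X ^ (m + 1) * (A * W) := by
      ring
    rw [h, divq_add, divq_pow_succ_mul]

/-- For odd `A, B, V`, any `U`, and any `k ≤ n+1`,
`T_{A,B}^k(U + q^{n+1} V) = T_{A,B}^k(U) + q^{n+1-k} W_k` for some odd `W_k`. -/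
theorem Tab_iterate_add_qpow_succ (A B : PowerSeries (ZMod 2))
    (hA : PowerSeries.constantCoeff A = 1)
    (hB : PowerSeries.constantCoeff B = 1)
    (n : ℕ) (U V : PowerSeries (ZMod 2))
    (hV : PowerSeries.constantCoeff V = 1) :
    ∀ k ≤ n + 1, ∃ W : PowerSeries (ZMod 2),
      PowerSeries.constantCoeff W = 1 ∧
      (Tab A B)^[k] (U + X ^ (n + 1) * V) = (Tab A B)^[k] U + X ^ (n + 1 - k) * W := by
  intro k
  induction k with
  | zero => intro _; exact ⟨V, hV, by simp⟩
  | succ k ih =>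
    intro hk
    have hk' : k ≤ n := Nat.lt_succ_iff.mp hk
    obtain ⟨W, hW, hEq⟩ := ih (le_trans hk' (Nat.le_succ n))
    have hnk : n + 1 - k = (n - k) + 1 := by omega
    rw [hnk] at hEq
    obtain ⟨W', hW', hstep⟩ := Tab_step A B hA hB (n - k) ((Tab A B)^[k] U) W hW
    refine ⟨W', hW', ?_⟩
    have : n + 1 - (k + 1) = n - k := by omega
    rw [this, Function.iterate_succ_apply', Function.iterate_succ_apply', hEq, hstep]
end

section
/- For every polynomial x ∈ F₂[[q]] (i.e., every element with only finitely many nonzero coefficients), there exists k ∈ ℕ such that T_{1,1+q²}^k(x) ∈ {0, 1+q, 1, q}; that is, the T_{1,1+q²}-orbit of every polynomial contains the 2-cycle {1, q} or one of the two fixed points 0 or 1+q. -/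
open PowerSeries
open scoped Classical

/-- An element of `F₂[[q]]` is a polynomial if it has only finitely many nonzero
coefficients. -/
def IsPolynomial (x : PowerSeries (ZMod 2)) : Prop :=
  {n : ℕ | PowerSeries.coeff n x ≠ 0}.Finite

lemma coeff_divq (x : PowerSeries (ZMod 2)) (n : ℕ) :
    coeff n (divq x) = coeff (n + 1) x :=
  coeff_mk _ _

lemma coeff_T (x : PowerSeries (ZMod 2)) (n : ℕ) (hn : 2 ≤ n)
    (h : ∀ m, n + 1 ≤ m → coeff m x = 0) :
    ∀ m, n ≤ m → coeff m (Tab 1 (1 + X ^ 2) x) = 0 := by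
  intro m hm
  unfold Tab
  split
  · rw [coeff_divq]; exact h _ (by omega)
  · rw [coeff_divq, one_mul, map_add, map_add, h _ (by omega), coeff_one,
      coeff_X_pow, if_neg (by omega), if_neg (by omega)]
    ring

lemma key : ∀ n : ℕ, ∀ x : PowerSeries (ZMod 2),
    (∀ m, n + 2 ≤ m → coeff m x = 0) →
    ∃ k : ℕ, (Tab 1 (1 + X ^ 2))^[k] x ∈
      ({0, 1 + X, 1, X} : Set (PowerSeries (ZMod 2))) := by
  intro n
  induction n with
  | zero =>
    intro x h
    refine ⟨0, ?_⟩
    have h2 : ∀ a : ZMod 2, a = 0 ∨ a = 1 := by decide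
    have hx : ∀ m, x = PowerSeries.mk (fun k => if k = m then 1 else 0) →
        x = (X : PowerSeries (ZMod 2)) ^ m := by
      intro m hm
      rw [hm]; ext k; rw [coeff_mk, coeff_X_pow]
    simp only [Function.iterate_zero, id_eq, Set.mem_insert_iff, Set.mem_singleton_iff]
    rcases h2 (coeff 0 x) with h0 | h0 <;>
      rcases h2 (coeff 1 x) with h1 | h1
    · left
      ext m
      match m with
      | 0 => simpa using h0
      | 1 => simpa using h1
      | (k + 2) => simpa using h _ (by omega)
    · right; right; right
      ext m
      rw [coeff_X]
      match m with
      | 0 => simpa using h0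
      | 1 => simpa using h1
      | (k + 2) => simpa using h _ (by omega)
    · right; right; left
      ext m
      rw [coeff_one]
      match m with
      | 0 => simpa using h0
      | 1 => simpa using h1
      | (k + 2) => simpa using h _ (by omega)
    · right; left
      ext m
      rw [map_add, coeff_one, coeff_X]
      match m with
      | 0 => simpa using h0
      | 1 => simpa using h1
      | (k + 2) => simpa using h _ (by omega)
  | succ n ih =>
    intro x h
    obtain ⟨k, hk⟩ := ih (Tab 1 (1 + X ^ 2) x)
      (coeff_T x (n + 2) (by omega) (fun m hm => h m (by omega)))
    exact ⟨k + 1, by rwa [Function.iterate_succ_apply]⟩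

/-- The `T_{1,1+q²}`-orbit of every polynomial reaches the 2-cycle `{1, q}` or one of the
fixed points `0`, `1+q`. -/
theorem Tab_one_orbit_of_poly (x : PowerSeries (ZMod 2)) (hx : IsPolynomial x) :
    ∃ k : ℕ, (Tab 1 (1 + X ^ 2))^[k] x ∈
      ({0, 1 + X, 1, X} : Set (PowerSeries (ZMod 2))) := by
  obtain ⟨N, hN⟩ := hx.bddAbove
  apply key N x
  intro m hm
  by_contra hc
  have := hN hc
  omega
end
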